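/- Let n, s be integers with n ≥ 2 and 1 ≤ s ≤ n−2, let M be a multiset of n natural numbers, and let A(M) be the set of all permutations of M. If gcd(s, n) = 1, then there exists an s-overlap cycle for A(M). -/

import Mathlib

/-- `A(M)`: the set of all permutations of the multiset `M`, i.e. the words whose
multiset of letters is `M`. -/
def multisetPerms (M : Multiset ℕ) : Set (List ℕ) :=
  {w | (w : Multiset ℕ) = M}

/-- `IsOCycle s N C f` says `f 0, f 1, …, f (N-1)` is an `s`-overlap cycle for the
set `C` of strings: it is a cyclic ordering of all elements of `C` (each occurring
exactly once) in which the last `s` letters of each word equal the first `s`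
letters of the cyclically next word. -/
def IsOCycle (s N : ℕ) (C : Set (List ℕ)) (f : ℕ → List ℕ) : Prop :=
  (∀ i < N, f i ∈ C) ∧
    (∀ c ∈ C, ∃! i, i < N ∧ f i = c) ∧
    ∀ i < N, (f i).drop ((f i).length - s) = (f ((i + 1) % N)).take s

namespace OCP

/-! ### Basic notions -/

/-- the overlap relation -/
def Ov (s : ℕ) (w u : List ℕ) : Prop := w.drop (w.length - s) = u.take s

/-- the last `s` letters -/
def key (s : ℕ) (w : List ℕ) : List ℕ := w.drop (w.length - s)

lemma ov_iff {s : ℕ} {w u : List ℕ} : Ov s w u ↔ key s w = u.take s := Iff.rfl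

/-- the successor rotation -/
def sig (n s : ℕ) (w : List ℕ) : List ℕ := w.rotate (n - s)

lemma sig_iterate (n s : ℕ) (w : List ℕ) (k : ℕ) :
    (sig n s)^[k] w = w.rotate (k * (n - s)) := by
  induction k with
  | zero => simp
  | succ k ih =>
      rw [Function.iterate_succ_apply', ih]; unfold sig
      rw [List.rotate_rotate]; ring_nf

lemma rotate_mul_length (u : List ℕ) (q : ℕ) : u.rotate (u.length * q) = u := by
  rw [← List.rotate_mod, Nat.mul_mod_right, List.rotate_zero]

lemma ov_sig {n s : ℕ} (hs : s ≤ n) (w : List ℕ) (hw : w.length = n) :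
    Ov s w (sig n s w) := by
  have h1 : n - s ≤ w.length := by omega
  unfold Ov sig
  rw [List.rotate_eq_drop_append_take h1, hw]
  have h2 : (w.drop (n - s)).length = s := by rw [List.length_drop]; omega
  rw [List.take_left' h2]

lemma rotate_mem_of_closed {P : List (List ℕ)}
    (hrc : ∀ w ∈ P, ∀ k, w.rotate k ∈ P) {u : List ℕ} {m : ℕ}
    (h : u.rotate m ∈ P) : u ∈ P := by
  rcases Nat.eq_zero_or_pos u.length with h0 | h0
  · rw [List.length_eq_zero_iff] at h0; subst h0; simpa using h
  · have hm := hrc _ h (u.length - m % u.length)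
    rw [List.rotate_rotate] at hm
    have hdm := Nat.div_add_mod m u.length
    have h1 : m % u.length < u.length := Nat.mod_lt _ h0
    have hkey : m + (u.length - m % u.length) = u.length * (m / u.length + 1) := by
      rw [Nat.mul_succ]; omega
    rwa [hkey, rotate_mul_length] at hm

lemma exists_iter_eq_rotate {n s : ℕ} (hn : 2 ≤ n) (hs : s ≤ n)
    (hgcd : Nat.gcd s n = 1) (w : List ℕ) (hw : w.length = n) (j : ℕ) :
    ∃ k, (sig n s)^[k] w = w.rotate j := by
  haveI : NeZero n := ⟨by omega⟩
  have hcop : Nat.Coprime s n := hgcd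
  have hunit : IsUnit ((n - s : ℕ) : ZMod n) := by
    have hcast : ((n - s : ℕ) : ZMod n) = -(s : ZMod n) := by
      push_cast [Nat.cast_sub hs]; simp
    rw [hcast]
    exact (ZMod.isUnit_iff_coprime s n |>.mpr hcop).neg
  obtain ⟨v, hv⟩ := hunit
  set k : ℕ := ((j : ZMod n) * ↑v⁻¹).val with hk
  refine ⟨k, ?_⟩
  have hzk : ((k * (n - s) : ℕ) : ZMod n) = (j : ZMod n) := by
    push_cast
    rw [hk, ZMod.natCast_val, ZMod.cast_id, ← hv, mul_assoc]; simp
  have hmod : k * (n - s) ≡ j [MOD n] := (ZMod.natCast_eq_natCast_iff _ _ _).mp hzk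
  rw [sig_iterate]
  rw [← List.rotate_mod w (k * (n - s)), hw, hmod, ← hw, List.rotate_mod]

/-! ### Adjacent swaps and connectivity -/

def AdjSwap (a b : List ℕ) : Prop :=
  ∃ t x y z, a = t ++ x :: y :: z ∧ b = t ++ y :: x :: z

lemma adjSwap_symm {a b : List ℕ} (h : AdjSwap a b) : AdjSwap b a := by
  obtain ⟨t, x, y, z, h1, h2⟩ := h
  exact ⟨t, y, x, z, h2, h1⟩

lemma adjSwap_perm {a b : List ℕ} (h : AdjSwap a b) : a.Perm b := by
  obtain ⟨t, x, y, z, rfl, rfl⟩ := h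
  exact (List.Perm.swap y x z).append_left t

lemma eqvGen_cons (a : ℕ) {l₁ l₂ : List ℕ} (h : Relation.EqvGen AdjSwap l₁ l₂) :
    Relation.EqvGen AdjSwap (a :: l₁) (a :: l₂) := by
  induction h with
  | rel x y hxy =>
      obtain ⟨t, p, q, z, rfl, rfl⟩ := hxy
      exact Relation.EqvGen.rel _ _ ⟨a :: t, p, q, z, rfl, rfl⟩
  | refl x => exact Relation.EqvGen.refl _
  | symm x y _ ih => exact Relation.EqvGen.symm _ _ ih
  | trans x y z _ _ ih1 ih2 => exact Relation.EqvGen.trans _ _ _ ih1 ih2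

lemma perm_eqvGen {l₁ l₂ : List ℕ} (h : l₁.Perm l₂) : Relation.EqvGen AdjSwap l₁ l₂ := by
  induction h with
  | nil => exact Relation.EqvGen.refl _
  | cons a _ ih => exact eqvGen_cons a ih
  | swap x y l => exact Relation.EqvGen.rel _ _ ⟨[], y, x, l, rfl, rfl⟩
  | trans _ _ ih1 ih2 => exact Relation.EqvGen.trans _ _ _ ih1 ih2

lemma crossing_aux {α : Type*} (r : α → α → Prop) (S : α → Prop) :
    ∀ x y, Relation.EqvGen r x y →
      (S x ↔ S y) ∨ ∃ a b, (r a b ∨ r b a) ∧ S a ∧ ¬ S b := by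
  classical
  intro x y h
  induction h with
  | rel a b hab =>
      by_cases ha : S a
      · by_cases hb : S b
        · exact Or.inl (by simp [ha, hb])
        · exact Or.inr ⟨a, b, Or.inl hab, ha, hb⟩
      · by_cases hb : S b
        · exact Or.inr ⟨b, a, Or.inr hab, hb, ha⟩
        · exact Or.inl (by simp [ha, hb])
  | refl a => exact Or.inl Iff.rfl
  | symm a b _ ih =>
      rcases ih with h | h
      · exact Or.inl h.symm
      · exact Or.inr h
  | trans a b c _ _ ih1 ih2 =>
      rcases ih1 with h1 | h1
      · rcases ih2 with h2 | h2
        · exact Or.inl (h1.trans h2)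
        · exact Or.inr h2
      · exact Or.inr h1

lemma crossing {α : Type*} (r : α → α → Prop) (S : α → Prop)
    {x y : α} (h : Relation.EqvGen r x y) (hx : S x) (hy : ¬ S y) :
    ∃ a b, (r a b ∨ r b a) ∧ S a ∧ ¬ S b := by
  rcases crossing_aux r S x y h with h1 | h1
  · exact absurd (h1.mp hx) hy
  · exact h1

/-! ### Parameters -/

section Main

variable {n s : ℕ} (hn : 2 ≤ n) (hs1 : 1 ≤ s) (hs2 : s ≤ n - 2)
  (hgcd : Nat.gcd s n = 1) {M : Multiset ℕ} (hM : Multiset.card M = n)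

include hM in
lemma length_of_coe {w : List ℕ} (hw : (w : Multiset ℕ) = M) : w.length = n := by
  rw [← Multiset.coe_card, hw, hM]

include hn hs1 hs2 hgcd hM in
lemma exists_orbCycle {u : List ℕ} (hu : (u : Multiset ℕ) = M) :
    ∃ Q : List (List ℕ), Q ≠ [] ∧ Q.Nodup ∧ (∀ w ∈ Q, (w : Multiset ℕ) = M) ∧
      List.Chain' (Ov s) Q ∧ Q.getLast? = some u ∧ Q.head? = some (sig n s u) ∧
      (∀ w ∈ Q, ∀ k, w.rotate k ∈ Q) ∧ u ∈ Q ∧ (∀ w ∈ Q, ∃ k, w = u.rotate k) := by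
  have hsn : s ≤ n := by omega
  have hun : u.length = n := length_of_coe hM hu
  have hcoe : ∀ k, (((sig n s)^[k] u : List ℕ) : Multiset ℕ) = M := by
    intro k; rw [sig_iterate]
    rw [Multiset.coe_eq_coe.mpr (List.rotate_perm _ _), hu]
  have hlen : ∀ k, ((sig n s)^[k] u).length = n := by
    intro k; rw [sig_iterate, List.length_rotate, hun]
  have hex : ∃ p, 0 < p ∧ (sig n s)^[p] u = u :=
    ⟨n, by omega, by rw [sig_iterate, ← hun, rotate_mul_length]⟩
  classical
  obtain ⟨p, hp0, hper, hmin⟩ :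
      ∃ p, 0 < p ∧ (sig n s)^[p] u = u ∧ ∀ k, 0 < k → k < p → (sig n s)^[k] u ≠ u :=
    ⟨Nat.find hex, (Nat.find_spec hex).1, (Nat.find_spec hex).2,
      fun k hk1 hk2 hk3 => Nat.find_min hex hk2 ⟨hk1, hk3⟩⟩
  have hmul : ∀ a r, (sig n s)^[p * a + r] u = (sig n s)^[r] u := by
    intro a r
    induction a with
    | zero => simp
    | succ a ih =>
        have : p * (a + 1) + r = (p * a + r) + p := by ring
        rw [this, Function.iterate_add_apply, hper, ih]
  have hmod : ∀ k, (sig n s)^[k] u = (sig n s)^[k % p] u := by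
    intro k
    conv_lhs => rw [← Nat.div_add_mod k p]
    exact hmul _ _
  have hinj : ∀ a b, a < p → b < p → (sig n s)^[a] u = (sig n s)^[b] u → a = b := by
    have haux : ∀ a b, a ≤ b → b < p → (sig n s)^[a] u = (sig n s)^[b] u → a = b := by
      intro a b hab hbp h
      by_contra hne
      have e2 : (sig n s)^[b - a] ((sig n s)^[b] u) = (sig n s)^[b] u := by
        conv_lhs => rw [← h]
        rw [← Function.iterate_add_apply]
        congr 1; omega
      have e1 : (sig n s)^[p - b] ((sig n s)^[b] u) = u := by
        rw [← Function.iterate_add_apply]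
        have : p - b + b = p := by omega
        rw [this, hper]
      have e3 : (sig n s)^[b - a] u = u := by
        conv_lhs => rw [← e1, ← Function.iterate_add_apply]
        have : b - a + (p - b) = p - b + (b - a) := by omega
        rw [this, Function.iterate_add_apply, e2, ← Function.iterate_add_apply]
        have : p - b + b = p := by omega
        rw [this, hper]
      exact hmin (b - a) (by omega) (by omega) e3
    intro a b ha hb h
    rcases le_total a b with hab | hab
    · exact haux a b hab hb h
    · exact (haux b a hab ha h.symm).symm
  refine ⟨(List.range p).map (fun k => (sig n s)^[k + 1] u),
    ?_, ?_, ?_, ?_, ?_, ?_, ?_, ?_, ?_⟩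
  · simp [List.range_eq_nil]; omega
  · refine (List.nodup_range (n := p)).map_on ?_
    intro a ha b hb h
    rw [List.mem_range] at ha hb
    have h1 : (sig n s)^[(a+1) % p] u = (sig n s)^[(b+1) % p] u := by
      rw [← hmod, ← hmod, h]
    have h2 := hinj _ _ (Nat.mod_lt _ hp0) (Nat.mod_lt _ hp0) h1
    rcases Nat.lt_or_ge (a+1) p with hap | hap
    · rcases Nat.lt_or_ge (b+1) p with hbp | hbp
      · rw [Nat.mod_eq_of_lt hap, Nat.mod_eq_of_lt hbp] at h2; omega
      · have hbp' : b + 1 = p := by omega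
        rw [Nat.mod_eq_of_lt hap, hbp', Nat.mod_self] at h2; omega
    · have hap' : a + 1 = p := by omega
      rcases Nat.lt_or_ge (b+1) p with hbp | hbp
      · rw [hap', Nat.mod_self, Nat.mod_eq_of_lt hbp] at h2; omega
      · omega
  · intro w hw
    simp only [List.mem_map, List.mem_range] at hw
    obtain ⟨k, _, rfl⟩ := hw
    exact hcoe _
  · rw [List.Chain', List.isChain_map]
    obtain ⟨q, hq⟩ : ∃ q, p = q + 1 := ⟨p - 1, by omega⟩
    rw [hq, List.isChain_range_succ]
    intro m _
    have : (sig n s)^[m + 1 + 1] u = sig n s ((sig n s)^[m + 1] u) :=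
      Function.iterate_succ_apply' _ _ _
    rw [show m.succ = m + 1 from rfl, this]
    exact ov_sig hsn _ (hlen _)
  · obtain ⟨q, hq⟩ : ∃ q, p = q + 1 := ⟨p - 1, by omega⟩
    rw [hq, List.range_succ, List.map_append]
    simp only [List.map_cons, List.map_nil, List.getLast?_concat]
    rw [show q + 1 = p by omega, hper]
  · obtain ⟨q, hq⟩ : ∃ q, p = q + 1 := ⟨p - 1, by omega⟩
    rw [hq, List.range_succ_eq_map]
    simp
  · intro w hw k
    simp only [List.mem_map, List.mem_range] at hw ⊢
    obtain ⟨a, _, rfl⟩ := hw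
    rw [sig_iterate, List.rotate_rotate]
    obtain ⟨m, hm⟩ := exists_iter_eq_rotate hn hsn hgcd u hun ((a+1) * (n-s) + k)
    rcases Nat.eq_zero_or_pos (m % p) with h0 | h0
    · refine ⟨p - 1, by omega, ?_⟩
      rw [show p - 1 + 1 = p by omega, hper, ← hm, hmod, h0]
      simp
    · refine ⟨m % p - 1, by have := Nat.mod_lt m hp0; omega, ?_⟩
      rw [show m % p - 1 + 1 = m % p by omega, ← hmod, hm]
  · simp only [List.mem_map, List.mem_range]
    exact ⟨p - 1, by omega, by rw [show p - 1 + 1 = p by omega, hper]⟩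
  · intro w hw
    simp only [List.mem_map, List.mem_range] at hw
    obtain ⟨a, _, rfl⟩ := hw
    exact ⟨(a + 1) * (n - s), by rw [sig_iterate]⟩

/-! ### The key-equality lemma for adjacent swaps -/

include hn hs1 hs2 in
lemma key_cons_cons (x y : ℕ) (m : List ℕ) (hm : m.length = n - 2) :
    key s (x :: y :: m) = m.drop (n - s - 2) := by
  have hlen : (x :: y :: m).length = n := by simp [hm]; omega
  unfold key
  rw [hlen]
  rw [show n - s = (n - s - 2) + 1 + 1 by omega]
  rw [List.drop_succ_cons, List.drop_succ_cons]
  have : n - s - 2 + 1 + 1 - 2 = n - s - 2 := by omega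
  rw [this]

include hn hs1 hs2 hgcd hM in
lemma exists_cross {P : List (List ℕ)} (hPne : P ≠ [])
    (hPM : ∀ w ∈ P, (w : Multiset ℕ) = M)
    (hrc : ∀ w ∈ P, ∀ k, w.rotate k ∈ P)
    {v : List ℕ} (hv : (v : Multiset ℕ) = M) (hvP : v ∉ P) :
    ∃ w u : List ℕ, w ∈ P ∧ (u : Multiset ℕ) = M ∧ u ∉ P ∧ key s w = key s u := by
  have hw0 : P.head hPne ∈ P := List.head_mem hPne
  have hw0M : ((P.head hPne : List ℕ) : Multiset ℕ) = M := hPM _ hw0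
  have hperm : (P.head hPne).Perm v := Multiset.coe_eq_coe.mp (hw0M.trans hv.symm)
  obtain ⟨a, b, hab, haP, hbP⟩ := crossing AdjSwap (· ∈ P) (perm_eqvGen hperm) hw0 hvP
  have hab' : AdjSwap a b := by
    rcases hab with h | h
    · exact h
    · exact adjSwap_symm h
  obtain ⟨t, x, y, z, rfl, rfl⟩ := hab'
  have haM : ((t ++ x :: y :: z : List ℕ) : Multiset ℕ) = M := hPM _ haP
  have hbM : ((t ++ y :: x :: z : List ℕ) : Multiset ℕ) = M := by
    rw [Multiset.coe_eq_coe.mpr (adjSwap_perm (adjSwap_symm ⟨t, x, y, z, rfl, rfl⟩))]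
    exact haM
  have halen : (t ++ x :: y :: z).length = n := length_of_coe hM haM
  have htle : t.length ≤ (t ++ x :: y :: z).length := by simp
  have hblen : (t ++ y :: x :: z).length = n := length_of_coe hM hbM
  have htle' : t.length ≤ (t ++ y :: x :: z).length := by simp
  refine ⟨(t ++ x :: y :: z).rotate t.length, (t ++ y :: x :: z).rotate t.length,
    hrc _ haP _, ?_, ?_, ?_⟩
  · rw [Multiset.coe_eq_coe.mpr (List.rotate_perm _ _)]; exact hbM
  · intro hmem
    exact hbP (rotate_mem_of_closed hrc hmem)
  · have hwa : (t ++ x :: y :: z).rotate t.length = x :: y :: (z ++ t) := by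
      rw [List.rotate_eq_drop_append_take htle, List.drop_left, List.take_left]
      simp
    have hwb : (t ++ y :: x :: z).rotate t.length = y :: x :: (z ++ t) := by
      rw [List.rotate_eq_drop_append_take htle', List.drop_left, List.take_left]
      simp
    have hzt : (z ++ t).length = n - 2 := by
      simp at halen ⊢; omega
    rw [hwa, hwb, key_cons_cons hn hs1 hs2 _ _ _ hzt, key_cons_cons hn hs1 hs2 _ _ _ hzt]

/-! ### The cycle invariant -/

/-- The invariant maintained while growing the overlap cycle. -/
def Inv (s : ℕ) (M : Multiset ℕ) (P : List (List ℕ)) : Prop :=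
  P ≠ [] ∧ P.Nodup ∧ (∀ w ∈ P, (w : Multiset ℕ) = M) ∧ List.Chain' (Ov s) P ∧
    (∀ x y, P.getLast? = some x → P.head? = some y → Ov s x y) ∧
    (∀ w ∈ P, ∀ k, w.rotate k ∈ P)

lemma inv_rotate {P : List (List ℕ)} (h : Inv s M P) (k : ℕ) : Inv s M (P.rotate k) := by
  induction k generalizing P with
  | zero => rwa [List.rotate_zero]
  | succ k ih =>
      match P, h with
      | [], h => exact absurd rfl h.1
      | a :: l, h =>
        rw [List.rotate_cons_succ]
        refine ih ?_
        obtain ⟨hne, hnd, hmem, hch, hwrap, hrc⟩ := h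
        refine ⟨by simp, ?_, ?_, ?_, ?_, ?_⟩
        · rw [List.nodup_append]
          refine ⟨(List.nodup_cons.mp hnd).2, List.nodup_singleton _, ?_⟩
          intro x hx b hb hxb
          exact (List.nodup_cons.mp hnd).1 (by simp at hb; rw [← hb, ← hxb]; exact hx)
        · intro w hw
          rw [List.mem_append] at hw
          rcases hw with hw | hw
          · exact hmem _ (List.mem_cons_of_mem _ hw)
          · simp at hw; subst hw; exact hmem _ List.mem_cons_self
        · -- Chain' (l ++ [a])
          match l with
          | [] => exact List.isChain_singleton _
          | b :: l' =>
            rw [List.Chain', List.isChain_append]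
            refine ⟨(List.isChain_cons_cons.mp hch).2, List.isChain_singleton _, ?_⟩
            intro x hx y hy
            simp at hy; subst hy
            apply hwrap
            · rw [List.getLast?_cons_cons]; exact hx
            · rfl
        · -- wrap of l ++ [a]
          intro x y hx hy
          rw [List.getLast?_concat] at hx
          injection hx with hx; subst hx
          match l with
          | [] =>
            simp at hy; subst hy
            exact hwrap a a (by rfl) rfl
          | b :: l' =>
            have : y = b := by simp at hy; exact hy.symm
            subst this
            exact (List.isChain_cons_cons.mp hch).1
        · intro w hw j
          rw [List.mem_append] at hw ⊢
          have hw' : w ∈ a :: l := by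
            rcases hw with hw | hw
            · exact List.mem_cons_of_mem _ hw
            · simp at hw; subst hw; exact List.mem_cons_self
          have := hrc _ hw' j
          rcases List.mem_cons.mp this with h1 | h1
          · exact Or.inr (by simp [h1])
          · exact Or.inl h1

include hn hs1 hs2 hgcd hM in
lemma merge {P : List (List ℕ)} (hInv : Inv s M P) {w u : List ℕ}
    (hw : w ∈ P) (hu : (u : Multiset ℕ) = M) (huP : u ∉ P)
    (hk : key s w = key s u) :
    ∃ P', Inv s M P' ∧ (∀ x ∈ P, x ∈ P') ∧ u ∈ P' := by
  have hsn : s ≤ n := by omega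
  obtain ⟨Q, hQne, hQnd, hQM, hQch, hQlast, hQhead, hQrc, hQu, hQrot⟩ :=
    exists_orbCycle hn hs1 hs2 hgcd hM hu
  obtain ⟨t1, t2, hsplit⟩ := List.append_of_mem hw
  have hlenP : t1.length + 1 ≤ P.length := by rw [hsplit]; simp
  set P1 := P.rotate (t1.length + 1) with hP1def
  have hP1inv : Inv s M P1 := inv_rotate hInv _
  have hP1eq : P1 = (t2 ++ t1) ++ [w] := by
    rw [hP1def, hsplit]
    have hsplit' : t1 ++ w :: t2 = (t1 ++ [w]) ++ t2 := by simp
    rw [hsplit', List.rotate_eq_drop_append_take (by simp)]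
    rw [show t1.length + 1 = (t1 ++ [w]).length by simp]
    rw [List.drop_left, List.take_left]
    simp
  have hP1mem : ∀ x, x ∈ P1 ↔ x ∈ P := fun x => List.mem_rotate
  have hP1ne : P1 ≠ [] := hP1inv.1
  have hP1last : P1.getLast? = some w := by rw [hP1eq, List.getLast?_concat]
  -- members of Q are not in P1
  have hQnotP : ∀ x ∈ Q, x ∉ P1 := by
    intro x hx hx'
    obtain ⟨k, rfl⟩ := hQrot x hx
    exact huP (rotate_mem_of_closed hInv.2.2.2.2.2 ((hP1mem _).mp hx'))
  obtain ⟨hne1, hnd1, hmem1, hch1, hwrap1, hrc1⟩ := hP1inv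
  refine ⟨P1 ++ Q, ⟨?_, ?_, ?_, ?_, ?_, ?_⟩, ?_, ?_⟩
  · simp [hP1ne]
  · rw [List.nodup_append]
    exact ⟨hnd1, hQnd, fun x hx y hy hxy => hQnotP y hy (hxy ▸ hx)⟩
  · intro x hx
    rcases List.mem_append.mp hx with h | h
    · exact hmem1 _ h
    · exact hQM _ h
  · rw [List.Chain', List.isChain_append]
    refine ⟨hch1, hQch, ?_⟩
    intro x hx y hy
    rw [hP1last] at hx
    injection hx with hx; subst hx
    rw [hQhead] at hy
    injection hy with hy; subst hy
    rw [ov_iff, hk, ← ov_iff]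
    exact ov_sig hsn u (length_of_coe hM hu)
  · intro x y hx hy
    rw [List.getLast?_append_of_ne_nil _ hQne, hQlast] at hx
    injection hx with hx; subst hx
    rw [List.head?_append_of_ne_nil _ hP1ne] at hy
    have hov : Ov s w y := hwrap1 w y hP1last hy
    rw [ov_iff] at hov ⊢
    rw [← hk]
    exact hov
  · intro x hx k
    rcases List.mem_append.mp hx with h | h
    · exact List.mem_append_left _ ((hP1mem _).mpr (hInv.2.2.2.2.2 _ ((hP1mem _).mp h) k))
    · exact List.mem_append_right _ (hQrc _ h k)
  · intro x hx
    exact List.mem_append_left _ ((hP1mem _).mpr hx)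
  · exact List.mem_append_right _ hQu

include hM in
lemma mem_Cfin {x : List ℕ} :
    x ∈ M.toList.permutations.toFinset ↔ (x : Multiset ℕ) = M := by
  classical
  rw [List.mem_toFinset, List.mem_permutations]
  constructor
  · intro h
    rw [← Multiset.coe_toList M]
    exact Multiset.coe_eq_coe.mpr h
  · intro h
    exact Multiset.coe_eq_coe.mp (by rw [h, Multiset.coe_toList])

include hn hs1 hs2 hgcd hM in
lemma grow : ∀ (m : ℕ) (P : List (List ℕ)), Inv s M P →
    (M.toList.permutations.toFinset \ P.toFinset).card ≤ m →
    ∃ P', Inv s M P' ∧ ∀ x : List ℕ, (x : Multiset ℕ) = M → x ∈ P' := by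
  classical
  intro m
  induction m with
  | zero =>
      intro P hInv hcard
      refine ⟨P, hInv, ?_⟩
      intro x hx
      have hx1 : x ∈ M.toList.permutations.toFinset := (mem_Cfin hM).mpr hx
      have hempty : M.toList.permutations.toFinset \ P.toFinset = ∅ :=
        Finset.card_eq_zero.mp (Nat.le_zero.mp hcard)
      by_contra hxP
      have : x ∈ M.toList.permutations.toFinset \ P.toFinset := by
        rw [Finset.mem_sdiff]
        exact ⟨hx1, fun h => hxP (List.mem_toFinset.mp h)⟩
      rw [hempty] at this
      exact absurd this (Finset.notMem_empty x)
  | succ m ih =>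
      intro P hInv hcard
      by_cases hall : ∀ x : List ℕ, (x : Multiset ℕ) = M → x ∈ P
      · exact ⟨P, hInv, hall⟩
      · push_neg at hall
        obtain ⟨v, hv, hvP⟩ := hall
        obtain ⟨w, u, hw, hu, huP, hk⟩ :=
          exists_cross hn hs1 hs2 hgcd hM hInv.1 hInv.2.2.1 hInv.2.2.2.2.2 hv hvP
        obtain ⟨P', hInv', hsub, huP'⟩ := merge hn hs1 hs2 hgcd hM hInv hw hu huP hk
        refine ih P' hInv' ?_
        have husd : u ∈ M.toList.permutations.toFinset \ P.toFinset := by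
          rw [Finset.mem_sdiff]
          exact ⟨(mem_Cfin hM).mpr hu, fun h => huP (List.mem_toFinset.mp h)⟩
        have hss : M.toList.permutations.toFinset \ P'.toFinset ⊆
            (M.toList.permutations.toFinset \ P.toFinset).erase u := by
          intro x hx
          rw [Finset.mem_sdiff] at hx
          rw [Finset.mem_erase, Finset.mem_sdiff]
          refine ⟨?_, hx.1, fun hxP =>
            hx.2 (List.mem_toFinset.mpr (hsub _ (List.mem_toFinset.mp hxP)))⟩
          rintro rfl
          exact hx.2 (List.mem_toFinset.mpr huP')
        have h1 := Finset.card_le_card hss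
        rw [Finset.card_erase_of_mem husd] at h1
        omega

end Main
end OCP

/-- For `n ≥ 2`, `1 ≤ s ≤ n - 2` with `gcd(s,n) = 1`, and any multiset `M` of `n`
natural numbers, there exists an `s`-overlap cycle for `A(M)`. -/
theorem exists_ocycle_multisetPerms (n s : ℕ) (hn : 2 ≤ n) (hs1 : 1 ≤ s)
    (hs2 : s ≤ n - 2) (M : Multiset ℕ) (hM : Multiset.card M = n)
    (hgcd : Nat.gcd s n = 1) :
    ∃ f : ℕ → List ℕ, IsOCycle s (Nat.card (multisetPerms M)) (multisetPerms M) f := by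
  classical
  have hsn : s ≤ n := by omega
  have hu0 : ((M.toList : List ℕ) : Multiset ℕ) = M := Multiset.coe_toList M
  obtain ⟨Q, hQne, hQnd, hQM, hQch, hQlast, hQhead, hQrc, hQu, hQrot⟩ :=
    OCP.exists_orbCycle hn hs1 hs2 hgcd hM hu0
  have hQInv : OCP.Inv s M Q := by
    refine ⟨hQne, hQnd, hQM, hQch, ?_, hQrc⟩
    intro x y hx hy
    rw [hQlast] at hx; injection hx with hx; subst hx
    rw [hQhead] at hy; injection hy with hy; subst hy
    exact OCP.ov_sig hsn _ (OCP.length_of_coe hM hu0)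
  obtain ⟨P, hInv, hall⟩ := OCP.grow hn hs1 hs2 hgcd hM
    (M.toList.permutations.toFinset \ Q.toFinset).card Q hQInv le_rfl
  obtain ⟨hPne, hPnd, hPM, hPch, hPwrap, hPrc⟩ := hInv
  have hset : multisetPerms M = ↑P.toFinset := by
    ext x
    simp only [multisetPerms, Set.mem_setOf_eq, Finset.coe_sort_coe, Finset.mem_coe,
      List.mem_toFinset]
    exact ⟨fun h => hall x h, fun h => hPM x h⟩
  have hN : Nat.card (multisetPerms M) = P.length := by
    rw [hset, Nat.card_coe_set_eq, Set.ncard_coe_finset,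
      List.toFinset_card_of_nodup hPnd]
  have hl0 : 0 < P.length := List.length_pos_iff.mpr hPne
  refine ⟨fun i => P.getD i [], ?_, ?_, ?_⟩
  · intro i hi
    rw [hN] at hi
    show P.getD i [] ∈ multisetPerms M
    rw [List.getD_eq_getElem _ _ hi, hset]
    simp only [Finset.coe_sort_coe, Finset.mem_coe, List.mem_toFinset]
    exact List.getElem_mem hi
  · intro c hc
    rw [hset] at hc
    simp only [Finset.coe_sort_coe, Finset.mem_coe, List.mem_toFinset] at hc
    obtain ⟨i, hi, hieq⟩ := List.mem_iff_getElem.mp hc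
    refine ⟨i, ⟨by rw [hN]; exact hi,
      by show P.getD i [] = c; rw [List.getD_eq_getElem _ _ hi]; exact hieq⟩, ?_⟩
    rintro j ⟨hj, hjeq'⟩
    have hjeq : P.getD j [] = c := hjeq'
    rw [hN] at hj
    rw [List.getD_eq_getElem _ _ hj] at hjeq
    exact (List.Nodup.getElem_inj_iff hPnd).mp (by rw [hjeq, hieq])
  · intro i hi
    rw [hN] at hi ⊢
    rcases Nat.lt_or_ge (i + 1) P.length with hi1 | hi1
    · rw [Nat.mod_eq_of_lt hi1]
      show OCP.Ov s (P.getD i []) (P.getD (i + 1) [])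
      rw [List.getD_eq_getElem _ _ hi, List.getD_eq_getElem _ _ hi1]
      have := List.isChain_iff_getElem.mp hPch i (by omega)
      simpa using this
    · have hieq : i = P.length - 1 := by omega
      subst hieq
      have hmod : (P.length - 1 + 1) % P.length = 0 := by
        rw [show P.length - 1 + 1 = P.length by omega, Nat.mod_self]
      rw [hmod]
      show OCP.Ov s (P.getD (P.length - 1) []) (P.getD 0 [])
      rw [List.getD_eq_getElem _ _ hi, List.getD_eq_getElem _ _ hl0]
      apply hPwrap
      · rw [List.getLast?_eq_getElem?,
          List.getElem?_eq_getElem (by omega : P.length - 1 < P.length)]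
      · rw [List.head?_eq_getElem?, List.getElem?_eq_getElem hl0]
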